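/- If there exists a k-regular simple graph of girth g with v vertices, where k > 2, then for every positive integer n there exists a k-regular simple graph of girth g with nv vertices. -/

import Mathlib

open SimpleGraph Set

/-- The degree of a vertex, via the natural cardinality of its neighbor set. -/
noncomputable def deg {V : Type*} (G : SimpleGraph V) (v : V) : ℕ :=
  (G.neighborSet v).ncard

/-- Number of edges both of whose endpoints have degree `d`. -/
noncomputable def edgeCountDeg {V : Type*} (G : SimpleGraph V) (d : ℕ) : ℕ :=
  {e ∈ G.edgeSet | ∀ v ∈ e, deg G v = d}.ncard

/-- An `(r,s;g)`-balanced biregular graph: girth `g`, degree set exactly `{r, s}`,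
and equally many vertices of degree `r` as of degree `s`. -/
def IsBabi {V : Type*} (r s g : ℕ) (G : SimpleGraph V) : Prop :=
  G.girth = g ∧ (∀ v, deg G v = r ∨ deg G v = s) ∧
  (∃ v, deg G v = r) ∧ (∃ v, deg G v = s) ∧
  {v | deg G v = r}.ncard = {v | deg G v = s}.ncard

private lemma egirth_le_len {α : Type*} {G : SimpleGraph α} {a : α} {w : G.Walk a a}
    (hw : w.IsCycle) : G.egirth ≤ w.length :=
  iInf_le_of_le a (iInf_le_of_le w (iInf_le _ hw))

private lemma egirth_le_of_hom {α β : Type*} {G : SimpleGraph α} {H : SimpleGraph β}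
    (f : G →g H) (hf : Function.Injective f) : H.egirth ≤ G.egirth := by
  rw [SimpleGraph.le_egirth]
  intro a w hw
  calc H.egirth ≤ ((w.map f).length : ℕ∞) := egirth_le_len (hw.map hf)
    _ = w.length := by rw [SimpleGraph.Walk.length_map]

private lemma egirth_iso {α β : Type*} {G : SimpleGraph α} {H : SimpleGraph β}
    (f : G ≃g H) : G.egirth = H.egirth :=
  le_antisymm (egirth_le_of_hom f.symm.toHom f.symm.injective)
    (egirth_le_of_hom f.toHom f.injective)

private lemma deg_iso {α β : Type*} {G : SimpleGraph α} {H : SimpleGraph β}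
    (f : G ≃g H) (x : α) : deg H (f x) = deg G x := by
  simp only [deg, ← Nat.card_coe_set_eq]
  exact Nat.card_congr (f.mapNeighborSet x).symm

/-- Disjoint copies of `G`, indexed by `α`. -/
private def copies {α β : Type*} (G : SimpleGraph β) : SimpleGraph (α × β) where
  Adj x y := x.1 = y.1 ∧ G.Adj x.2 y.2
  symm := ⟨fun x y ⟨h1, h2⟩ => ⟨h1.symm, h2.symm⟩⟩
  loopless := ⟨fun x ⟨_, h2⟩ => G.loopless.irrefl _ h2⟩

private def sndHom {α β : Type*} (G : SimpleGraph β) : (copies (α := α) G) →g G :=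
  ⟨Prod.snd, fun h => h.2⟩

private def inlHom {α β : Type*} (G : SimpleGraph β) (a : α) : G →g (copies (α := α) G) :=
  ⟨fun x => (a, x), fun h => ⟨rfl, h⟩⟩

private lemma deg_copies {α β : Type*} (G : SimpleGraph β) (a : α) (x : β) :
    deg (copies (α := α) G) (a, x) = deg G x := by
  have himg : (copies (α := α) G).neighborSet (a, x) = (fun z => (a, z)) '' G.neighborSet x := by
    ext ⟨b, y⟩
    simp only [mem_neighborSet, Set.mem_image]
    constructor
    · rintro ⟨h1, h2⟩
      exact ⟨y, h2, congrArg (fun c => (c, y)) h1⟩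
    · rintro ⟨z, hz, hzz⟩
      obtain ⟨rfl, rfl⟩ : a = b ∧ z = y := by simpa [Prod.ext_iff] using hzz
      exact ⟨rfl, hz⟩
  rw [deg, himg, Set.ncard_image_of_injective _ (fun z1 z2 h => by simpa using h)]
  rfl

private lemma copies_support_fst {α β : Type*} {G : SimpleGraph β} {u w : α × β}
    (p : (copies (α := α) G).Walk u w) : ∀ y ∈ p.support, y.1 = u.1 := by
  induction p with
  | nil => simp
  | @cons u u' w h p ih =>
    intro y hy
    rw [SimpleGraph.Walk.support_cons, List.mem_cons] at hy
    rcases hy with rfl | hy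
    · rfl
    · rw [ih y hy]; exact h.1.symm

private lemma copies_cycle_proj {α β : Type*} {G : SimpleGraph β} {a : α} {x : β}
    {p : (copies (α := α) G).Walk (a, x) (a, x)} (hp : p.IsCycle) :
    (p.map (sndHom G)).IsCycle := by
  have hs : ∀ y ∈ p.support, y.1 = a := copies_support_fst p
  have hsnd : ∀ y1 ∈ p.support, ∀ y2 ∈ p.support,
      (y1 : α × β).2 = y2.2 → y1 = y2 := by
    intro y1 h1 y2 h2 heq
    exact Prod.ext (by rw [hs y1 h1, hs y2 h2]) heq
  rw [SimpleGraph.Walk.isCycle_def] at hp ⊢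
  obtain ⟨htrail, hnil, hnodup⟩ := hp
  refine ⟨?_, ?_, ?_⟩
  · rw [SimpleGraph.Walk.isTrail_def, SimpleGraph.Walk.edges_map]
    refine List.Nodup.map_on ?_ htrail.edges_nodup
    intro e1 he1 e2 he2 heq
    induction e1 using Sym2.ind with
    | _ u1 w1 =>
    induction e2 using Sym2.ind with
    | _ u2 w2 =>
    have hu1 := p.fst_mem_support_of_mem_edges he1
    have hw1 := p.snd_mem_support_of_mem_edges he1
    have hu2 := p.fst_mem_support_of_mem_edges he2
    have hw2 := p.snd_mem_support_of_mem_edges he2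
    simp only [Sym2.map_pair_eq, Sym2.eq_iff] at heq ⊢
    rcases heq with ⟨h1, h2⟩ | ⟨h1, h2⟩
    · exact Or.inl ⟨hsnd u1 hu1 u2 hu2 h1, hsnd w1 hw1 w2 hw2 h2⟩
    · exact Or.inr ⟨hsnd u1 hu1 w2 hw2 h1, hsnd w1 hw1 u2 hu2 h2⟩
  · rw [Ne, SimpleGraph.Walk.map_eq_nil_iff]; exact hnil
  · rw [SimpleGraph.Walk.support_map, ← List.map_tail]
    refine List.Nodup.map_on ?_ hnodup
    intro y1 h1 y2 h2 heq
    exact hsnd y1 (List.mem_of_mem_tail h1) y2 (List.mem_of_mem_tail h2) heq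

private lemma egirth_copies {α β : Type*} (G : SimpleGraph β) (a₀ : α) :
    (copies (α := α) G).egirth = G.egirth := by
  refine le_antisymm (egirth_le_of_hom (inlHom G a₀) fun x y h => congrArg Prod.snd h) ?_
  rw [SimpleGraph.le_egirth]
  rintro ⟨a, x⟩ w hw
  calc G.egirth ≤ ((w.map (sndHom G)).length : ℕ∞) := egirth_le_len (copies_cycle_proj hw)
    _ = w.length := by rw [SimpleGraph.Walk.length_map]

/-- multiplying the order of a `(k,g)`-graph. -/
theorem stmt_3 (k g v : ℕ) (hk : 2 < k)
    (h : ∃ G : SimpleGraph (Fin v), (∀ x, deg G x = k) ∧ G.girth = g) :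
    ∀ n : ℕ, 0 < n →
      ∃ G : SimpleGraph (Fin (n * v)), (∀ x, deg G x = k) ∧ G.girth = g := by
  intro n hn
  obtain ⟨G, hdeg, hg⟩ := h
  have a₀ : Fin n := ⟨0, hn⟩
  let e : Fin (n * v) ≃ Fin n × Fin v := finProdFinEquiv.symm
  let F : (copies G).comap e.toEmbedding ≃g copies G := SimpleGraph.Iso.comap e (copies G)
  refine ⟨(copies G).comap e.toEmbedding, ?_, ?_⟩
  · intro x
    obtain ⟨a, y, hxy⟩ : ∃ a y, F x = (a, y) := ⟨(F x).1, (F x).2, rfl⟩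
    have h1 := deg_iso F x
    rw [hxy] at h1
    rw [← h1, deg_copies, hdeg]
  · have hE : ((copies G).comap e.toEmbedding).egirth = G.egirth :=
      (egirth_iso F).trans (egirth_copies G a₀)
    rw [SimpleGraph.girth, hE, ← SimpleGraph.girth, hg]
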